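/- Let H be a predictable process and τ a stopping time. Define the process K by K(ω,t) = H(ω, τ(ω)) if τ(ω) < t (in particular τ(ω) < ∞), and K(ω,t) = 0 otherwise. Then K is predictable and locally bounded: there exists an increasing sequence of stopping times T_n ↑ ∞ such that each stopped process K^{T_n} is bounded. -/

import Mathlib

/-!
Common framework: stochastic processes on predictable sets of interval type (PSITs),
following Yue–Wang–Huang, "Stochastic Integrals on Predictable Sets of Interval Type
with Financial Applications".

Time index: `ℝ≥0`.  Stopping times take values in `ℝ≥0∞`.
A process is a map `Ω → ℝ≥0 → ℝ`.
-/

open MeasureTheory Set Filter Function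
open scoped NNReal ENNReal Topology

noncomputable section

attribute [local instance] Classical.propDecidable

variable {Ω : Type*} [m : MeasurableSpace Ω]

/-- A stopping time with values in `[0,∞]` relative to the filtration `ℱ`:
`{T ≤ t} ∈ ℱ t` for every `t`. -/
def IsStopping (ℱ : Filtration ℝ≥0 m) (T : Ω → ℝ≥0∞) : Prop :=
  ∀ t : ℝ≥0, MeasurableSet[ℱ t] {ω | T ω ≤ (t : ℝ≥0∞)}

/-- The process `X` stopped at the (possibly infinite) random time `T`:
`X^T (ω, t) = X (ω, T ω ⊓ t)`. -/
def stopped (X : Ω → ℝ≥0 → ℝ) (T : Ω → ℝ≥0∞) : Ω → ℝ≥0 → ℝ :=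
  fun ω t => X ω (min (T ω) (t : ℝ≥0∞)).toNNReal

/-- An increasing sequence of stopping times with `T n ↑ ∞`. -/
def LocSeq (ℱ : Filtration ℝ≥0 m) (T : ℕ → Ω → ℝ≥0∞) : Prop :=
  (∀ n, IsStopping ℱ (T n)) ∧ (∀ ω, Monotone fun n => T n ω) ∧ ∀ ω, (⨆ n, T n ω) = ∞

/-- The usual conditions: the filtration is right-continuous and `ℱ 0` contains
all `ℙ`-null sets. -/
def UsualConditions (ℙ : Measure Ω) (ℱ : Filtration ℝ≥0 m) : Prop :=
  (∀ t : ℝ≥0, (ℱ t : MeasurableSpace Ω) = ⨅ (s : ℝ≥0) (_ : t < s), (ℱ s : MeasurableSpace Ω)) ∧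
    ∀ s : Set Ω, ℙ s = 0 → MeasurableSet[ℱ 0] s

/-- The predictable σ-field on `Ω × ℝ≥0`, generated by the sets `F × {0}` with
`F ∈ ℱ 0` and `F × (s, t]` with `F ∈ ℱ s`. -/
def predictableSigma (ℱ : Filtration ℝ≥0 m) : MeasurableSpace (Ω × ℝ≥0) :=
  MeasurableSpace.generateFrom
    ({A | ∃ F : Set Ω, MeasurableSet[ℱ 0] F ∧ A = F ×ˢ ({0} : Set ℝ≥0)} ∪
      {A | ∃ (s t : ℝ≥0) (F : Set Ω), s < t ∧ MeasurableSet[ℱ s] F ∧ A = F ×ˢ Ioc s t})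

/-- The class `𝒫` of predictable processes. -/
def classP (ℱ : Filtration ℝ≥0 m) : Set (Ω → ℝ≥0 → ℝ) :=
  {X | Measurable[predictableSigma ℱ] fun p : Ω × ℝ≥0 => X p.1 p.2}

/-- A set of interval type: every section is nonempty and of the form
`[0, T ω)` or `[0, T ω]`. -/
def IsIntervalType (B : Set (Ω × ℝ≥0)) : Prop :=
  ∀ ω : Ω, {t : ℝ≥0 | (ω, t) ∈ B}.Nonempty ∧
    ∃ T : ℝ≥0∞, {t : ℝ≥0 | (ω, t) ∈ B} = {t : ℝ≥0 | (t : ℝ≥0∞) < T} ∨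
      {t : ℝ≥0 | (ω, t) ∈ B} = {t : ℝ≥0 | (t : ℝ≥0∞) ≤ T}

/-- A predictable set of interval type (PSIT). -/
def IsPSIT (ℱ : Filtration ℝ≥0 m) (B : Set (Ω × ℝ≥0)) : Prop :=
  IsIntervalType B ∧ MeasurableSet[predictableSigma ℱ] B

/-- The debut of the complement of `B`. -/
def debut (B : Set (Ω × ℝ≥0)) (ω : Ω) : ℝ≥0∞ :=
  ⨅ (t : ℝ≥0) (_ : (ω, t) ∉ B), (t : ℝ≥0∞)

/-- The stochastic interval `[0, T]`. -/
def Icc0 (T : Ω → ℝ≥0∞) : Set (Ω × ℝ≥0) :=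
  {p : Ω × ℝ≥0 | (p.2 : ℝ≥0∞) ≤ T p.1}

/-- The extension `X·1_B` of a function on `B` by `0` off `B`. -/
def extend0 (B : Set (Ω × ℝ≥0)) (X : Ω → ℝ≥0 → ℝ) : Ω → ℝ≥0 → ℝ :=
  fun ω t => if (ω, t) ∈ B then X ω t else 0

/-- A process: a family of random variables indexed by `ℝ≥0`. -/
def IsProcess (X : Ω → ℝ≥0 → ℝ) : Prop :=
  ∀ t : ℝ≥0, Measurable fun ω => X ω t

/-- A process on `B` : the extension by `0` off `B` is a process. -/
def IsProcessOn (B : Set (Ω × ℝ≥0)) (X : Ω → ℝ≥0 → ℝ) : Prop :=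
  IsProcess (extend0 B X)

/-- Coupled sequence `(T n, Y n)` for the process `X` on `B`: the `T n` are increasing
stopping times with `T n ↑ debut B`, `⋃ n [0, T n] ⊇ B`, and `X = Y n` on `B ∩ [0, T n]`. -/
structure IsCS (ℱ : Filtration ℝ≥0 m) (B : Set (Ω × ℝ≥0)) (X : Ω → ℝ≥0 → ℝ)
    (T : ℕ → Ω → ℝ≥0∞) (Y : ℕ → Ω → ℝ≥0 → ℝ) : Prop where
  stopping : ∀ n, IsStopping ℱ (T n)
  mono : ∀ ω, Monotone fun n => T n ω
  sup_eq : ∀ ω, (⨆ n, T n ω) = debut B ω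
  covers : B ⊆ ⋃ n, Icc0 (T n)
  agrees : ∀ (n : ℕ) (ω : Ω) (t : ℝ≥0), (ω, t) ∈ B → (t : ℝ≥0∞) ≤ T n ω → X ω t = Y n ω t

/-- `X ∈ 𝒟^B` : `X` admits a coupled sequence all of whose members lie in `𝒟`
(a fundamental coupled sequence, FCS). -/
def MemOn (ℱ : Filtration ℝ≥0 m) (𝒟 : Set (Ω → ℝ≥0 → ℝ)) (B : Set (Ω × ℝ≥0))
    (X : Ω → ℝ≥0 → ℝ) : Prop :=
  ∃ T Y, IsCS ℱ B X T Y ∧ ∀ n, Y n ∈ 𝒟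

/-- A stopping time on `B` : a stopping time with `[0, S] ⊆ B`. -/
def IsStoppingOn (ℱ : Filtration ℝ≥0 m) (B : Set (Ω × ℝ≥0)) (S : Ω → ℝ≥0∞) : Prop :=
  IsStopping ℱ S ∧ Icc0 S ⊆ B

/-- A fundamental sequence (FS) for `B` : an increasing sequence of stopping times with
`B = ⋃ n [0, τ n]`. -/
def IsFS (ℱ : Filtration ℝ≥0 m) (B : Set (Ω × ℝ≥0)) (τ : ℕ → Ω → ℝ≥0∞) : Prop :=
  (∀ n, IsStopping ℱ (τ n)) ∧ (∀ ω, Monotone fun n => τ n ω) ∧ B = ⋃ n, Icc0 (τ n)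

/-- Stability of a class of processes under stopping. -/
def StableUnderStopping (ℱ : Filtration ℝ≥0 m) (𝒟 : Set (Ω → ℝ≥0 → ℝ)) : Prop :=
  ∀ X ∈ 𝒟, ∀ T : Ω → ℝ≥0∞, IsStopping ℱ T → stopped X T ∈ 𝒟

/-- The localized class `𝒟_loc`. -/
def localized (ℱ : Filtration ℝ≥0 m) (𝒟 : Set (Ω → ℝ≥0 → ℝ)) : Set (Ω → ℝ≥0 → ℝ) :=
  {X | Measurable[ℱ 0] (fun ω => X ω 0) ∧
    ∃ T : ℕ → Ω → ℝ≥0∞, LocSeq ℱ T ∧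
      ∀ n, (fun ω t => stopped X (T n) ω t - X ω 0) ∈ 𝒟}

/-- Stability of a class of processes under localization: `𝒟 = 𝒟_loc`. -/
def StableUnderLocalization (ℱ : Filtration ℝ≥0 m) (𝒟 : Set (Ω → ℝ≥0 → ℝ)) : Prop :=
  localized ℱ 𝒟 = 𝒟

/-- A càdlàg function on `ℝ≥0` : right-continuous with finite left limits. -/
def IsCadlagFn (f : ℝ≥0 → ℝ) : Prop :=
  (∀ t, ContinuousWithinAt f (Ici t) t) ∧
    ∀ t : ℝ≥0, 0 < t → ∃ l : ℝ, Tendsto f (𝓝[<] t) (𝓝 l)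

/-- The class `𝔐` of jointly measurable processes. -/
def classM : Set (Ω → ℝ≥0 → ℝ) :=
  {X | Measurable fun p : Ω × ℝ≥0 => X p.1 p.2}

/-- The class `𝔐₀` of jointly measurable processes with null initial value. -/
def classM0 : Set (Ω → ℝ≥0 → ℝ) :=
  {X | X ∈ classM ∧ ∀ ω, X ω 0 = 0}

/-- The class `ℛ` of càdlàg processes. -/
def classR : Set (Ω → ℝ≥0 → ℝ) := {X : Ω → ℝ≥0 → ℝ | ∀ ω, IsCadlagFn (X ω)}

/-- The class `𝒞` of continuous processes. -/
def classC : Set (Ω → ℝ≥0 → ℝ) := {X : Ω → ℝ≥0 → ℝ | ∀ ω, Continuous (X ω)}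

/-- Finite variation on every compact interval. -/
def FiniteVarFn (f : ℝ≥0 → ℝ) : Prop := ∀ t : ℝ≥0, BoundedVariationOn f (Iic t)

/-- The class `𝔙` of càdlàg processes with paths of finite variation on compacts. -/
def classVraw : Set (Ω → ℝ≥0 → ℝ) :=
  {X : Ω → ℝ≥0 → ℝ | ∀ ω, IsCadlagFn (X ω) ∧ FiniteVarFn (X ω)}

/-- Adaptedness to the filtration `ℱ`. -/
def IsAdapted (ℱ : Filtration ℝ≥0 m) (X : Ω → ℝ≥0 → ℝ) : Prop :=
  ∀ t : ℝ≥0, Measurable[ℱ t] fun ω => X ω t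

/-- The class `𝒱` of adapted càdlàg finite-variation processes. -/
def classV (ℱ : Filtration ℝ≥0 m) : Set (Ω → ℝ≥0 → ℝ) :=
  {X | X ∈ classVraw ∧ IsAdapted ℱ X}

/-- The class `𝒱₀`. -/
def classV0 (ℱ : Filtration ℝ≥0 m) : Set (Ω → ℝ≥0 → ℝ) :=
  {X | X ∈ classV ℱ ∧ ∀ ω, X ω 0 = 0}

/-- Uniformly integrable martingale. -/
def IsUIMartingale (ℙ : Measure Ω) (ℱ : Filtration ℝ≥0 m) (X : Ω → ℝ≥0 → ℝ) : Prop :=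
  Martingale (fun t ω => X ω t) ℱ ℙ ∧ UniformIntegrable (fun t ω => X ω t) 1 ℙ

/-- The class `ℳ_loc` of local martingales: càdlàg adapted processes `X` admitting
stopping times `T n ↑ ∞` with each `X^{T n} − X₀` a uniformly integrable martingale. -/
def classMloc (ℙ : Measure Ω) (ℱ : Filtration ℝ≥0 m) : Set (Ω → ℝ≥0 → ℝ) :=
  {X | (∀ ω, IsCadlagFn (X ω)) ∧ IsAdapted ℱ X ∧
    ∃ T : ℕ → Ω → ℝ≥0∞, LocSeq ℱ T ∧
      ∀ n, IsUIMartingale ℙ ℱ fun ω t => stopped X (T n) ω t - X ω 0}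

/-- The class `ℳ_{loc,0}`. -/
def classMloc0 (ℙ : Measure Ω) (ℱ : Filtration ℝ≥0 m) : Set (Ω → ℝ≥0 → ℝ) :=
  {X | X ∈ classMloc ℙ ℱ ∧ ∀ ω, X ω 0 = 0}

/-- The class `𝒮` of semimartingales. -/
def classS (ℙ : Measure Ω) (ℱ : Filtration ℝ≥0 m) : Set (Ω → ℝ≥0 → ℝ) :=
  {X | ∃ M ∈ classMloc ℙ ℱ, ∃ A ∈ classV0 ℱ, X = fun ω t => M ω t + A ω t}

/-- The left limit of `f` at `t`, with the convention `f(0−) = f 0`. -/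
def leftLimFn (f : ℝ≥0 → ℝ) (t : ℝ≥0) : ℝ :=
  if t = 0 then f 0 else limUnder (𝓝[<] t) f

/-- The left-limit process. -/
def leftLimProc (X : Ω → ℝ≥0 → ℝ) : Ω → ℝ≥0 → ℝ := fun ω t => leftLimFn (X ω) t

/-- The jump process `ΔX = X − X₋`. -/
def jumpProc (X : Ω → ℝ≥0 → ℝ) : Ω → ℝ≥0 → ℝ := fun ω t => X ω t - leftLimFn (X ω) t

/-- The pre-stopped process `X^{T−} = X·1_{[0,T)} + X_{T−}·1_{[T,∞)}`. -/
def stoppedPre (X : Ω → ℝ≥0 → ℝ) (T : Ω → ℝ≥0∞) : Ω → ℝ≥0 → ℝ :=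
  fun ω t => if (t : ℝ≥0∞) < T ω then X ω t else leftLimFn (X ω) (T ω).toNNReal

/-- Indistinguishability on `B`. -/
def IndistOn (ℙ : Measure Ω) (B : Set (Ω × ℝ≥0)) (X Y : Ω → ℝ≥0 → ℝ) : Prop :=
  ∀ᵐ ω ∂ℙ, ∀ t : ℝ≥0, (ω, t) ∈ B → X ω t = Y ω t

/-- A locally bounded process: stopped at suitable `T n ↑ ∞` it is bounded. -/
def LocallyBounded (ℱ : Filtration ℝ≥0 m) (X : Ω → ℝ≥0 → ℝ) : Prop :=
  ∃ T : ℕ → Ω → ℝ≥0∞, LocSeq ℱ T ∧ ∀ n, ∃ C : ℝ, ∀ ω t, |stopped X (T n) ω t| ≤ C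

/-- The positive-variation function of a path (with an atom `a 0` at time `0`). -/
def posVarFn (a : ℝ≥0 → ℝ) (t : ℝ≥0) : ℝ :=
  max (a 0) 0 + ((eVariationOn a (Iic t)).toReal + a t - a 0) / 2

/-- The negative-variation function of a path (with an atom `a 0` at time `0`). -/
def negVarFn (a : ℝ≥0 → ℝ) (t : ℝ≥0) : ℝ :=
  max (-a 0) 0 + ((eVariationOn a (Iic t)).toReal - a t + a 0) / 2

/-- `(μp, μm)` are the Jordan components of the Lebesgue–Stieltjes measure `da` of the
path `a` (including an atom of mass `a 0` at `0`), characterized on the time set `s`. -/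
def IsLSPairOn (a : ℝ≥0 → ℝ) (μp μm : Measure ℝ≥0) (s : Set ℝ≥0) : Prop :=
  ∀ t ∈ s, μp (Iic t) = ENNReal.ofReal (posVarFn a t) ∧
    μm (Iic t) = ENNReal.ofReal (negVarFn a t)

/-- Pathwise Lebesgue–Stieltjes integrability: `∫_{[0,t]} |h| |da| < ∞` for all `t ∈ s`. -/
def LSIntegrablePathOn (h a : ℝ≥0 → ℝ) (s : Set ℝ≥0) : Prop :=
  ∃ μp μm : Measure ℝ≥0, IsLSPairOn a μp μm s ∧
    ∀ t ∈ s, (∫⁻ u in Iic t, ENNReal.ofReal |h u| ∂(μp + μm)) < ∞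

/-- `L` is the pathwise Lebesgue–Stieltjes integral `t ↦ ∫_{[0,t]} h da`, for `t ∈ s`. -/
def IsLSIntegralPathOn (h a : ℝ≥0 → ℝ) (s : Set ℝ≥0) (L : ℝ≥0 → ℝ) : Prop :=
  ∃ μp μm : Measure ℝ≥0, IsLSPairOn a μp μm s ∧
    ∀ t ∈ s, (∫⁻ u in Iic t, ENNReal.ofReal |h u| ∂(μp + μm)) < ∞ ∧
      L t = (∫ u in Iic t, h u ∂μp) - ∫ u in Iic t, h u ∂μm

/-- `H` is integrable on `B` with respect to `A` :
`∫_{[0,t]} |H_s(ω)| |dA_s(ω)| < ∞` for all `(ω, t) ∈ B`.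
(With `B = univ` this is classic Lebesgue–Stieltjes integrability.) -/
def LSIntegrableOn (B : Set (Ω × ℝ≥0)) (H A : Ω → ℝ≥0 → ℝ) : Prop :=
  ∀ ω, LSIntegrablePathOn (H ω) (A ω) {t : ℝ≥0 | (ω, t) ∈ B}

/-- `G = H • A`, the Lebesgue–Stieltjes integral on `B` of `H` with respect to `A` :
`G (ω, t) = ∫_{[0,t]} H_s(ω) dA_s(ω)` for `(ω, t) ∈ B`.
(With `B = univ` this is the classic Lebesgue–Stieltjes integral `H.A`.) -/
def IsLSIntegralOn (B : Set (Ω × ℝ≥0)) (H A G : Ω → ℝ≥0 → ℝ) : Prop :=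
  ∀ ω, IsLSIntegralPathOn (H ω) (A ω) {t : ℝ≥0 | (ω, t) ∈ B} (G ω)

/-- The patched process `x₀·1_{Ω×{0}} + Σ_{n} (Y n)·1_{(T (n-1), T n]}` (with `T (-1) = 0`). -/
def patch (T : ℕ → Ω → ℝ≥0∞) (Y : ℕ → Ω → ℝ≥0 → ℝ) (x0 : Ω → ℝ) : Ω → ℝ≥0 → ℝ :=
  fun ω t =>
    if t = 0 then x0 ω
    else ∑' n : ℕ,
      if (if n = 0 then (0 : ℝ≥0∞) else T (n - 1) ω) < (t : ℝ≥0∞) ∧ (t : ℝ≥0∞) ≤ T n ω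
        then Y n ω t else 0

/-- `V` is a quadratic covariation on `B` of the local martingales `M, N` on `B` :
`V ∈ 𝒱^B`, `MN − V ∈ (ℳ_{loc,0})^B` and `ΔV = ΔM·ΔN` on `B`. -/
def IsQuadCovarOn (ℙ : Measure Ω) (ℱ : Filtration ℝ≥0 m) (B : Set (Ω × ℝ≥0))
    (M N V : Ω → ℝ≥0 → ℝ) : Prop :=
  MemOn ℱ (classV ℱ) B V ∧
    MemOn ℱ (classMloc0 ℙ ℱ) B (fun ω t => M ω t * N ω t - V ω t) ∧
    IndistOn ℙ B (jumpProc V) fun ω t => jumpProc M ω t * jumpProc N ω t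

/-- `V` is a (classic) quadratic covariation of local martingales `M, N` :
`V ∈ 𝒱`, `MN − V ∈ ℳ_{loc,0}` and `ΔV = ΔM·ΔN`. -/
def IsQuadCovar (ℙ : Measure Ω) (ℱ : Filtration ℝ≥0 m) (M N V : Ω → ℝ≥0 → ℝ) : Prop :=
  V ∈ classV ℱ ∧ (fun ω t => M ω t * N ω t - V ω t) ∈ classMloc0 ℙ ℱ ∧
    ∀ᵐ ω ∂ℙ, ∀ t : ℝ≥0, jumpProc V ω t = jumpProc M ω t * jumpProc N ω t

/-- `H ∈ 𝓛_m(M)` : there is a local martingale `L` with `[L, N] = H.[M, N]`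
for every local martingale `N`. -/
def MemLm (ℙ : Measure Ω) (ℱ : Filtration ℝ≥0 m) (H M : Ω → ℝ≥0 → ℝ) : Prop :=
  ∃ L ∈ classMloc ℙ ℱ, ∀ N ∈ classMloc ℙ ℱ, ∀ V W : Ω → ℝ≥0 → ℝ,
    IsQuadCovar ℙ ℱ M N V → IsQuadCovar ℙ ℱ L N W →
      ∀ᵐ ω ∂ℙ, IsLSIntegralPathOn (H ω) (V ω) univ (W ω)

/-- `H ∈ 𝓛_m^B(M)` : there is a local martingale `L` on `B` with `[L, N] = H • [M, N]`
for every local martingale `N` on `B`. -/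
def MemLmOn (ℙ : Measure Ω) (ℱ : Filtration ℝ≥0 m) (B : Set (Ω × ℝ≥0))
    (H M : Ω → ℝ≥0 → ℝ) : Prop :=
  ∃ L, MemOn ℱ (classMloc ℙ ℱ) B L ∧
    ∀ N, MemOn ℱ (classMloc ℙ ℱ) B N → ∀ V W : Ω → ℝ≥0 → ℝ,
      IsQuadCovarOn ℙ ℱ B M N V → IsQuadCovarOn ℙ ℱ B L N W →
        ∀ᵐ ω ∂ℙ, IsLSIntegralPathOn (H ω) (V ω) {t : ℝ≥0 | (ω, t) ∈ B} (W ω)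


section Statement2Aux

variable {ℱ : Filtration ℝ≥0 m} {τ : Ω → ℝ≥0∞}

lemma predSigma_Ioc {G : Set Ω} {q r : ℝ≥0} (hqr : q < r) (hG : MeasurableSet[ℱ q] G) :
    MeasurableSet[predictableSigma ℱ] (G ×ˢ Ioc q r) :=
  MeasurableSpace.measurableSet_generateFrom (Or.inr ⟨q, r, G, hqr, hG, rfl⟩)

lemma predSigma_zero {G : Set Ω} (hG : MeasurableSet[ℱ 0] G) :
    MeasurableSet[predictableSigma ℱ] (G ×ˢ ({0} : Set ℝ≥0)) :=
  MeasurableSpace.measurableSet_generateFrom (Or.inl ⟨G, hG, rfl⟩)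

lemma predSigma_Ioi {G : Set Ω} {q : ℝ≥0} (hG : MeasurableSet[ℱ q] G) :
    MeasurableSet[predictableSigma ℱ] (G ×ˢ Ioi q) := by
  have h : (G ×ˢ Ioi q : Set (Ω × ℝ≥0)) = ⋃ n : ℕ, G ×ˢ Ioc q (q + n + 1) := by
    ext ⟨ω, u⟩
    simp only [Set.mem_prod, Set.mem_Ioc, Set.mem_Ioi, Set.mem_iUnion]
    constructor
    · rintro ⟨hω, hu⟩
      obtain ⟨n, hn⟩ := exists_nat_ge u
      exact ⟨n, hω, hu, hn.trans (le_add_self.trans le_self_add)⟩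
    · rintro ⟨n, hω, hu, _⟩; exact ⟨hω, hu⟩
  rw [h]
  exact MeasurableSet.iUnion fun n =>
    predSigma_Ioc (lt_of_le_of_lt le_self_add (lt_add_one _)) hG

lemma predSigma_univ {G : Set Ω} (hG : MeasurableSet[ℱ 0] G) :
    MeasurableSet[predictableSigma ℱ] (G ×ˢ (univ : Set ℝ≥0)) := by
  have h : (G ×ˢ (univ : Set ℝ≥0)) = G ×ˢ ({0} : Set ℝ≥0) ∪ G ×ˢ Ioi 0 := by
    ext ⟨ω, u⟩
    simp only [Set.mem_prod, mem_univ, and_true, Set.mem_union, mem_singleton_iff, mem_Ioi]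
    constructor
    · intro hω
      rcases eq_or_lt_of_le (zero_le : (0 : ℝ≥0) ≤ u) with h | h
      · exact Or.inl ⟨hω, h.symm⟩
      · exact Or.inr ⟨hω, h⟩
    · rintro (⟨hω, _⟩ | ⟨hω, _⟩) <;> exact hω
  rw [h]
  exact (predSigma_zero hG).union (predSigma_Ioi hG)

lemma predSigma_gt (hτ : IsStopping ℱ τ) :
    MeasurableSet[predictableSigma ℱ] {p : Ω × ℝ≥0 | τ p.1 < (p.2 : ℝ≥0∞)} := by
  have h : {p : Ω × ℝ≥0 | τ p.1 < (p.2 : ℝ≥0∞)} =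
      ⋃ q : ℚ, {ω | τ ω ≤ (((q : ℝ).toNNReal : ℝ≥0) : ℝ≥0∞)} ×ˢ Ioi (q : ℝ).toNNReal := by
    ext ⟨ω, u⟩
    simp only [mem_setOf_eq, mem_iUnion, Set.mem_prod, mem_Ioi]
    constructor
    · intro h
      have hne : τ ω ≠ ∞ := LT.lt.ne_top (lt_of_lt_of_le h le_top)
      have hco : ((τ ω).toNNReal : ℝ≥0∞) = τ ω := ENNReal.coe_toNNReal hne
      have hxu : ((τ ω).toNNReal : ℝ) < (u : ℝ) := by
        have : (τ ω).toNNReal < u := by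
          rw [← ENNReal.coe_lt_coe, hco]; exact h
        exact_mod_cast this
      obtain ⟨q, hq1, hq2⟩ := exists_rat_btwn hxu
      have hq0 : (0 : ℝ) ≤ (q : ℝ) := le_of_lt (lt_of_le_of_lt (τ ω).toNNReal.coe_nonneg hq1)
      refine ⟨q, ?_, ?_⟩
      · rw [← hco, ENNReal.coe_le_coe]
        exact (Real.le_toNNReal_iff_coe_le hq0).2 hq1.le
      · rw [← NNReal.coe_lt_coe, Real.coe_toNNReal _ hq0]
        exact hq2
    · rintro ⟨q, hq1, hq2⟩
      exact lt_of_le_of_lt hq1 (by exact_mod_cast hq2)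
  rw [h]
  exact MeasurableSet.iUnion fun q => predSigma_Ioi (hτ _)

lemma phi_measurable (hτ : IsStopping ℱ τ) :
    @Measurable (Ω × ℝ≥0) (Ω × ℝ≥0) (predictableSigma ℱ) (predictableSigma ℱ)
      (fun p => (p.1, (min (τ p.1) (p.2 : ℝ≥0∞)).toNNReal)) := by
  refine @measurable_generateFrom _ _ (predictableSigma ℱ) _ _ ?_
  rintro A (⟨F, hF, rfl⟩ | ⟨s, t, F, hst, hF, rfl⟩)
  · have h : (fun p : Ω × ℝ≥0 => (p.1, (min (τ p.1) (p.2 : ℝ≥0∞)).toNNReal)) ⁻¹'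
        (F ×ˢ ({0} : Set ℝ≥0)) =
        ((F ∩ {ω | τ ω ≤ ((0 : ℝ≥0) : ℝ≥0∞)}) ×ˢ (univ : Set ℝ≥0)) ∪ F ×ˢ ({0} : Set ℝ≥0) := by
      ext ⟨ω, u⟩
      simp only [mem_preimage, Set.mem_prod, mem_singleton_iff, Set.mem_union, mem_inter_iff,
        mem_setOf_eq, mem_univ, and_true]
      constructor
      · rintro ⟨hω, h0⟩
        have hne : min (τ ω) (u : ℝ≥0∞) ≠ ∞ :=
          ne_top_of_le_ne_top ENNReal.coe_ne_top (min_le_right _ _)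
        rw [ENNReal.toNNReal_eq_zero_iff] at h0
        rcases h0 with h0 | h0
        · rcases min_eq_iff.1 h0 with ⟨h1, -⟩ | ⟨h1, -⟩
          · exact Or.inl ⟨hω, by simp [h1]⟩
          · exact Or.inr ⟨hω, by exact_mod_cast h1⟩
        · exact absurd h0 hne
      · rintro (⟨hω, h0⟩ | ⟨hω, h0⟩)
        · have h0' : τ ω = 0 := by simpa using h0
          exact ⟨hω, by simp [h0', min_eq_left (zero_le : (0 : ℝ≥0∞) ≤ (↑u : ℝ≥0∞))]⟩
        · exact ⟨hω, by simp [h0, min_eq_right (zero_le : (0 : ℝ≥0∞) ≤ τ ω)]⟩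
    rw [h]
    exact (predSigma_univ (hF.inter (hτ 0))).union (predSigma_zero hF)
  · have h : (fun p : Ω × ℝ≥0 => (p.1, (min (τ p.1) (p.2 : ℝ≥0∞)).toNNReal)) ⁻¹'
        (F ×ˢ Ioc s t) =
        ((F \ {ω | τ ω ≤ (s : ℝ≥0∞)}) ×ˢ Ioc s t) ∪
          (((F ∩ {ω | τ ω ≤ (t : ℝ≥0∞)}) \ {ω | τ ω ≤ (s : ℝ≥0∞)}) ×ˢ Ioi t) := by
      ext ⟨ω, u⟩
      have hne : min (τ ω) (u : ℝ≥0∞) ≠ ∞ :=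
        ne_top_of_le_ne_top ENNReal.coe_ne_top (min_le_right _ _)
      have hco : ((min (τ ω) (u : ℝ≥0∞)).toNNReal : ℝ≥0∞) = min (τ ω) u :=
        ENNReal.coe_toNNReal hne
      simp only [mem_preimage, Set.mem_prod, Set.mem_Ioc, Set.mem_union, Set.mem_diff,
        mem_inter_iff, mem_setOf_eq, Set.mem_Ioi, not_le]
      have h1 : (s < (min (τ ω) (u : ℝ≥0∞)).toNNReal) ↔
          ((s : ℝ≥0∞) < τ ω ∧ s < u) := by
        rw [← ENNReal.coe_lt_coe, hco, lt_min_iff, ENNReal.coe_lt_coe]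
      have h2 : ((min (τ ω) (u : ℝ≥0∞)).toNNReal ≤ t) ↔
          (τ ω ≤ (t : ℝ≥0∞) ∨ u ≤ t) := by
        rw [← ENNReal.coe_le_coe, hco, min_le_iff, ENNReal.coe_le_coe]
      rw [h1, h2]
      constructor
      · rintro ⟨hω, ⟨hsτ, hsu⟩, hd⟩
        by_cases hut : u ≤ t
        · exact Or.inl ⟨⟨hω, hsτ⟩, hsu, hut⟩
        · rcases hd with hd | hd
          · exact Or.inr ⟨⟨⟨hω, hd⟩, hsτ⟩, not_le.1 hut⟩
          · exact absurd hd hut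
      · rintro (⟨⟨hω, hsτ⟩, hsu, hut⟩ | ⟨⟨⟨hω, hτt⟩, hsτ⟩, htu⟩)
        · exact ⟨hω, ⟨hsτ, hsu⟩, Or.inr hut⟩
        · exact ⟨hω, ⟨hsτ, hst.trans htu⟩, Or.inl hτt⟩
    rw [h]
    refine (predSigma_Ioc hst (hF.diff (hτ s))).union (predSigma_Ioi ?_)
    exact ((ℱ.mono hst.le _ hF).inter (hτ t)).diff (ℱ.mono hst.le _ (hτ s))

lemma psi_measurable (hτ : IsStopping ℱ τ) {A : Set (Ω × ℝ≥0)}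
    (hA : MeasurableSet[predictableSigma ℱ] A) (t : ℝ≥0) :
    MeasurableSet[ℱ t] {ω | (ω, (τ ω).toNNReal) ∈ A ∧ τ ω ≤ (t : ℝ≥0∞)} := by
  let M : MeasurableSpace (Ω × ℝ≥0) :=
  { MeasurableSet' := fun A => ∀ r : ℝ≥0,
      MeasurableSet[ℱ r] {ω | (ω, (τ ω).toNNReal) ∈ A ∧ τ ω ≤ (r : ℝ≥0∞)}
    measurableSet_empty := fun r => by
      simp only [mem_empty_iff_false, false_and, setOf_false]
      exact @MeasurableSet.empty _ (ℱ r)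
    measurableSet_compl := fun A hA r => by
      have h : {ω | (ω, (τ ω).toNNReal) ∈ Aᶜ ∧ τ ω ≤ (r : ℝ≥0∞)} =
          {ω | τ ω ≤ (r : ℝ≥0∞)} \ {ω | (ω, (τ ω).toNNReal) ∈ A ∧ τ ω ≤ (r : ℝ≥0∞)} := by
        ext ω
        simp only [mem_setOf_eq, mem_compl_iff, Set.mem_diff]
        tauto
      rw [h]
      exact (hτ r).diff (hA r)
    measurableSet_iUnion := fun g hg r => by
      have h : {ω | (ω, (τ ω).toNNReal) ∈ (⋃ i, g i) ∧ τ ω ≤ (r : ℝ≥0∞)} =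
          ⋃ i, {ω | (ω, (τ ω).toNNReal) ∈ g i ∧ τ ω ≤ (r : ℝ≥0∞)} := by
        ext ω
        simp only [mem_setOf_eq, mem_iUnion]
        tauto
      rw [h]
      exact MeasurableSet.iUnion fun i => hg i r }
  have hle : predictableSigma ℱ ≤ M := by
    apply MeasurableSpace.generateFrom_le
    rintro A (⟨F, hF, rfl⟩ | ⟨s, r, F, hsr, hF, rfl⟩)
    · intro u
      have h : {ω | (ω, (τ ω).toNNReal) ∈ F ×ˢ ({0} : Set ℝ≥0) ∧ τ ω ≤ (u : ℝ≥0∞)} =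
          F ∩ {ω | τ ω ≤ ((0 : ℝ≥0) : ℝ≥0∞)} := by
        ext ω
        simp only [mem_inter_iff, mem_setOf_eq, Set.mem_prod, mem_singleton_iff]
        constructor
        · rintro ⟨⟨hωF, h0⟩, hu⟩
          have hne : τ ω ≠ ∞ := ne_top_of_le_ne_top ENNReal.coe_ne_top hu
          rw [ENNReal.toNNReal_eq_zero_iff] at h0
          rcases h0 with h0 | h0
          · exact ⟨hωF, by simp [h0]⟩
          · exact absurd h0 hne
        · rintro ⟨hωF, h0⟩
          have h0' : τ ω = 0 := by simpa using h0
          exact ⟨⟨hωF, by simp [h0']⟩, by simp [h0']⟩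
      rw [h]
      exact (ℱ.mono (zero_le : (0 : ℝ≥0) ≤ u) _ hF).inter (ℱ.mono (zero_le : (0 : ℝ≥0) ≤ u) _ (hτ 0))
    · intro u
      by_cases hsu : s < u
      · have h : {ω | (ω, (τ ω).toNNReal) ∈ F ×ˢ Ioc s r ∧ τ ω ≤ (u : ℝ≥0∞)} =
            (F ∩ {ω | τ ω ≤ ((min r u : ℝ≥0) : ℝ≥0∞)}) \ {ω | τ ω ≤ (s : ℝ≥0∞)} := by
          ext ω
          simp only [Set.mem_diff, mem_inter_iff, mem_setOf_eq, Set.mem_prod, Set.mem_Ioc]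
          constructor
          · rintro ⟨⟨hωF, hs, hr⟩, hu⟩
            have hne : τ ω ≠ ∞ := ne_top_of_le_ne_top ENNReal.coe_ne_top hu
            have hco : ((τ ω).toNNReal : ℝ≥0∞) = τ ω := ENNReal.coe_toNNReal hne
            refine ⟨⟨hωF, ?_⟩, ?_⟩
            · rw [ENNReal.coe_min]
              exact le_min (by rw [← hco]; exact_mod_cast hr) hu
            · intro hle
              rw [← hco, ENNReal.coe_le_coe] at hle
              exact absurd hle (not_le.2 hs)
          · rintro ⟨⟨hωF, hmin⟩, hns⟩
            have hu' : τ ω ≤ (u : ℝ≥0∞) :=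
              hmin.trans (by exact_mod_cast min_le_right r u)
            have hne : τ ω ≠ ∞ := ne_top_of_le_ne_top ENNReal.coe_ne_top hu'
            have hco : ((τ ω).toNNReal : ℝ≥0∞) = τ ω := ENNReal.coe_toNNReal hne
            refine ⟨⟨hωF, ?_, ?_⟩, hu'⟩
            · have h2 : (s : ℝ≥0∞) < ((τ ω).toNNReal : ℝ≥0∞) := by
                rw [hco]; exact not_le.1 hns
              exact_mod_cast h2
            · have h2 : (((τ ω).toNNReal : ℝ≥0) : ℝ≥0∞) ≤ (r : ℝ≥0∞) := by
                rw [hco]; exact hmin.trans (by exact_mod_cast min_le_left r u)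
              exact_mod_cast h2
        rw [h]
        exact ((ℱ.mono hsu.le _ hF).inter
          (ℱ.mono (min_le_right r u) _ (hτ (min r u)))).diff (ℱ.mono hsu.le _ (hτ s))
      · have h : {ω | (ω, (τ ω).toNNReal) ∈ F ×ˢ Ioc s r ∧ τ ω ≤ (u : ℝ≥0∞)} = ∅ := by
          ext ω
          simp only [mem_setOf_eq, Set.mem_prod, Set.mem_Ioc, mem_empty_iff_false, iff_false,
            not_and]
          rintro ⟨hωF, hs, hr⟩ hu
          have hne : τ ω ≠ ∞ := ne_top_of_le_ne_top ENNReal.coe_ne_top hu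
          have h2 : (τ ω).toNNReal ≤ u := by
            have : (((τ ω).toNNReal : ℝ≥0) : ℝ≥0∞) ≤ (u : ℝ≥0∞) := by
              rw [ENNReal.coe_toNNReal hne]; exact hu
            exact_mod_cast this
          exact absurd (hs.trans_le (h2.trans (not_lt.1 hsu))) (lt_irrefl s)
        rw [h]
        exact @MeasurableSet.empty _ (ℱ u)
  exact hle _ hA t

end Statement2Aux

/-- For a predictable `H` and a stopping time `τ`, the process
`K (ω, t) = H (ω, τ ω)` if `τ ω < t` and `0` otherwise is predictable and
locally bounded. -/
theorem statement2 (ℙ : Measure Ω) [IsProbabilityMeasure ℙ] (ℱ : Filtration ℝ≥0 m)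
    (hUC : UsualConditions ℙ ℱ) (H : Ω → ℝ≥0 → ℝ) (hH : H ∈ classP ℱ)
    (τ : Ω → ℝ≥0∞) (hτ : IsStopping ℱ τ) :
    (fun (ω : Ω) (t : ℝ≥0) =>
        if τ ω < (t : ℝ≥0∞) then H ω (τ ω).toNNReal else 0) ∈ classP ℱ ∧
      LocallyBounded ℱ fun (ω : Ω) (t : ℝ≥0) =>
        if τ ω < (t : ℝ≥0∞) then H ω (τ ω).toNNReal else 0 := by
  constructor
  · -- predictability
    have heq : (fun p : Ω × ℝ≥0 =>
        (if τ p.1 < ((p.2 : ℝ≥0) : ℝ≥0∞) then H p.1 (τ p.1).toNNReal else 0)) =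
        ({p : Ω × ℝ≥0 | τ p.1 < (p.2 : ℝ≥0∞)}.indicator
          (fun p => H p.1 (min (τ p.1) (p.2 : ℝ≥0∞)).toNNReal)) := by
      ext p
      by_cases h : τ p.1 < (p.2 : ℝ≥0∞)
      · rw [if_pos h, Set.indicator_of_mem
          (show p ∈ {p : Ω × ℝ≥0 | τ p.1 < (p.2 : ℝ≥0∞)} from h), min_eq_left h.le]
      · rw [if_neg h, Set.indicator_of_notMem
          (show p ∉ {p : Ω × ℝ≥0 | τ p.1 < (p.2 : ℝ≥0∞)} from h)]
    have key : Measurable[predictableSigma ℱ] (fun p : Ω × ℝ≥0 =>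
        if τ p.1 < ((p.2 : ℝ≥0) : ℝ≥0∞) then H p.1 (τ p.1).toNNReal else 0) := by
      rw [heq]
      exact Measurable.indicator (hH.comp (phi_measurable hτ)) (predSigma_gt hτ)
    exact key
  · -- local boundedness
    refine ⟨fun n ω => if (n : ℝ) < |H ω (τ ω).toNNReal| then τ ω else ∞, ⟨?_, ?_, ?_⟩, ?_⟩
    · intro n t
      have hA : MeasurableSet[predictableSigma ℱ]
          {p : Ω × ℝ≥0 | (n : ℝ) < |H p.1 p.2|} :=
        (@Measurable.abs ℝ (Ω × ℝ≥0) _ _ _ (predictableSigma ℱ) _ _ _ hH) measurableSet_Ioi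
      have h : {ω | (if (n : ℝ) < |H ω (τ ω).toNNReal| then τ ω else ∞) ≤ (t : ℝ≥0∞)} =
          {ω | (ω, (τ ω).toNNReal) ∈ {p : Ω × ℝ≥0 | (n : ℝ) < |H p.1 p.2|} ∧
            τ ω ≤ (t : ℝ≥0∞)} := by
        ext ω
        simp only [mem_setOf_eq]
        by_cases h : (n : ℝ) < |H ω (τ ω).toNNReal|
        · rw [if_pos h]
          exact ⟨fun hle => ⟨h, hle⟩, fun h' => h'.2⟩
        · rw [if_neg h]
          constructor
          · intro hle
            exact absurd hle (by simp)
          · rintro ⟨h1, -⟩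
            exact absurd h1 h
      rw [h]
      exact psi_measurable hτ hA t
    · intro ω n k hnk
      simp only
      by_cases h : (k : ℝ) < |H ω (τ ω).toNNReal|
      · rw [if_pos h, if_pos (lt_of_le_of_lt (by exact_mod_cast hnk) h)]
      · rw [if_neg h]
        exact le_top
    · intro ω
      obtain ⟨n, hn⟩ := exists_nat_ge |H ω (τ ω).toNNReal|
      apply top_unique
      refine le_trans (le_of_eq ?_) (le_iSup _ n)
      show (⊤ : ℝ≥0∞) = if (n : ℝ) < |H ω (τ ω).toNNReal| then τ ω else ⊤
      rw [if_neg (not_lt.2 hn)]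
    · intro n
      refine ⟨n, fun ω t => ?_⟩
      simp only [stopped]
      by_cases h : (n : ℝ) < |H ω (τ ω).toNNReal|
      · by_cases hc : τ ω <
            (((min ((if (n : ℝ) < |H ω (τ ω).toNNReal| then τ ω else ⊤) : ℝ≥0∞)
              (t : ℝ≥0∞)).toNNReal : ℝ≥0) : ℝ≥0∞)
        · exfalso
          rw [if_pos h] at hc
          have hτω : τ ω ≠ ∞ := (lt_of_lt_of_le hc le_top).ne_top
          have hne : min (τ ω) (t : ℝ≥0∞) ≠ ∞ := ne_top_of_le_ne_top hτω (min_le_left _ _)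
          rw [ENNReal.coe_toNNReal hne] at hc
          exact absurd hc (not_lt.2 (min_le_left _ _))
        · rw [if_neg hc]
          simp
      · by_cases hc : τ ω <
            (((min ((if (n : ℝ) < |H ω (τ ω).toNNReal| then τ ω else ⊤) : ℝ≥0∞)
              (t : ℝ≥0∞)).toNNReal : ℝ≥0) : ℝ≥0∞)
        · rw [if_pos hc]
          exact not_lt.1 h
        · rw [if_neg hc]
          simp

end
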